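/- Let $M$ be the $3\times 3$ nonnegative matrix $M(\alpha,\beta)$ with entries $M_{11} = (1+\bar\alpha L)c$, $M_{12} = \bar\alpha L$, $M_{13} = \bar\beta$, $M_{21} = \sqrt{2}\bar\alpha L c$, $M_{22} = 1 - \eta\bar\alpha$, $M_{23} = \bar\beta$, $M_{31} = \varphi(1+\bar\alpha L)c$, $M_{32} = \varphi \bar\alpha L$, $M_{33} = \bar\beta$, where $c \in (0,1)$, $\varphi \ge 1$, $L > 0$, $\eta > 0$, $\bar\alpha > 0$, $\bar\beta \ge 0$. If all three diagonal entries of $M$ are strictly less than 1 and $\det(\mathbb{I} - M) > 0$, and $M$ is nonnegative, then the spectral radius of $M$ is strictly less than 1. -/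
import Mathlib

/-- Weighted max-norm bound: if there is a positive vector `v` with
`M v = v - d·1` entrywise for some `d > 0`, then every complex eigenvalue of the
nonnegative matrix `M` has norm `< 1`. -/
lemma stmt_12_aux (M : Matrix (Fin 3) (Fin 3) ℝ) (hMnn : ∀ i j, 0 ≤ M i j)
    (v : Fin 3 → ℝ) (hv : ∀ i, 0 < v i) (d : ℝ) (hd : 0 < d)
    (hrow : ∀ i, M i 0 * v 0 + M i 1 * v 1 + M i 2 * v 2 = v i - d) :
    ∀ μ : ℂ, μ ∈ spectrum ℂ (M.map (Complex.ofReal : ℝ → ℂ)) → ‖μ‖ < 1 := by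
  intro μ hμ
  set A := M.map (Complex.ofReal : ℝ → ℂ) with hA
  -- extract an eigenvector
  rw [spectrum.mem_iff] at hμ
  have hdet : (algebraMap ℂ (Matrix (Fin 3) (Fin 3) ℂ) μ - A).det = 0 := by
    by_contra hne
    exact hμ ((Matrix.isUnit_iff_isUnit_det _).mpr (isUnit_iff_ne_zero.mpr hne))
  obtain ⟨x, hx0, hx⟩ := (Matrix.exists_mulVec_eq_zero_iff).mpr hdet
  rw [Matrix.sub_mulVec] at hx
  have h2 : (algebraMap ℂ (Matrix (Fin 3) (Fin 3) ℂ) μ).mulVec x = μ • x := by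
    funext i
    simp [Matrix.algebraMap_matrix_apply, Matrix.mulVec, dotProduct,
      Fin.sum_univ_three]
  rw [h2, sub_eq_zero] at hx
  have heig : A.mulVec x = μ • x := hx.symm
  -- set up weights
  set w : Fin 3 → ℝ := fun j => ‖x j‖ with hw
  have hwnn : ∀ j, 0 ≤ w j := fun j => norm_nonneg _
  obtain ⟨i, -, hi⟩ := Finset.exists_max_image (Finset.univ : Finset (Fin 3))
    (fun j => w j / v j) ⟨0, Finset.mem_univ 0⟩
  set t := w i / v i with ht
  have hjle : ∀ j, w j ≤ t * v j := by
    intro j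
    have := hi j (Finset.mem_univ j)
    calc w j = w j / v j * v j := by
          rw [div_mul_cancel₀ _ (hv j).ne']
    _ ≤ t * v j := by
        exact mul_le_mul_of_nonneg_right this (le_of_lt (hv j))
  have hwi : w i = t * v i := by
    rw [ht, div_mul_cancel₀ _ (hv i).ne']
  have ht0 : 0 < t := by
    have hxj : ∃ j, x j ≠ 0 := by
      by_contra hcon
      push_neg at hcon
      exact hx0 (funext fun j => hcon j)
    obtain ⟨j, hj⟩ := hxj
    have hwj : 0 < w j := norm_pos_iff.mpr hj
    have := hi j (Finset.mem_univ j)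
    have : 0 < w j / v j := div_pos hwj (hv j)
    linarith [hi j (Finset.mem_univ j)]
  -- component of eigen-equation at i
  have hcomp : ((M i 0 : ℝ) : ℂ) * x 0 + ((M i 1 : ℝ) : ℂ) * x 1
      + ((M i 2 : ℝ) : ℂ) * x 2 = μ * x i := by
    have := congrFun heig i
    simpa [hA, Matrix.mulVec, dotProduct, Fin.sum_univ_three,
      Matrix.map_apply] using this
  -- norm bound
  have hb : ‖μ‖ * w i ≤ M i 0 * w 0 + M i 1 * w 1 + M i 2 * w 2 := by
    calc ‖μ‖ * w i = ‖μ * x i‖ := by rw [hw]; simp [norm_mul]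
    _ = ‖((M i 0 : ℝ) : ℂ) * x 0 + ((M i 1 : ℝ) : ℂ) * x 1
        + ((M i 2 : ℝ) : ℂ) * x 2‖ := by rw [hcomp]
    _ ≤ ‖((M i 0 : ℝ) : ℂ) * x 0‖ + ‖((M i 1 : ℝ) : ℂ) * x 1‖
        + ‖((M i 2 : ℝ) : ℂ) * x 2‖ := norm_add₃_le
    _ = M i 0 * w 0 + M i 1 * w 1 + M i 2 * w 2 := by
        simp [norm_mul, Complex.norm_real, hw,
          abs_of_nonneg (hMnn i 0), abs_of_nonneg (hMnn i 1), abs_of_nonneg (hMnn i 2)]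
  have hkey : M i 0 * v 0 + M i 1 * v 1 + M i 2 * v 2 = v i - d := hrow i
  have hkey' : t * (M i 0 * v 0) + t * (M i 1 * v 1) + t * (M i 2 * v 2)
      = t * v i - t * d := by
    linear_combination t * hkey
  have h0 := mul_le_mul_of_nonneg_left (hjle 0) (hMnn i 0)
  have h1 := mul_le_mul_of_nonneg_left (hjle 1) (hMnn i 1)
  have h2' := mul_le_mul_of_nonneg_left (hjle 2) (hMnn i 2)
  have htv : 0 < t * v i := mul_pos ht0 (hv i)
  have htd : 0 < t * d := mul_pos ht0 hd
  rw [hwi] at hb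
  nlinarith [norm_nonneg μ, mul_pos ht0 (hv i)]

theorem stmt_12 (c φ L η αbar βbar : ℝ)
    (hc0 : 0 < c) (hc1 : c < 1) (hφ : 1 ≤ φ) (hL : 0 < L) (hη : 0 < η)
    (hα : 0 < αbar) (hβ : 0 ≤ βbar)
    (M : Matrix (Fin 3) (Fin 3) ℝ)
    (hM : M = !![(1 + αbar * L) * c, αbar * L, βbar;
                 Real.sqrt 2 * αbar * L * c, 1 - η * αbar, βbar;
                 φ * (1 + αbar * L) * c, φ * (αbar * L), βbar])
    (hMnn : ∀ i j, 0 ≤ M i j)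
    (hdiag : ∀ i, M i i < 1)
    (hdet : 0 < (1 - M).det) :
    ∀ μ : ℂ, μ ∈ spectrum ℂ (M.map (Complex.ofReal : ℝ → ℂ)) → ‖μ‖ < 1 := by
  subst hM
  set s := Real.sqrt 2 with hsdef
  have hs1 : 1 < s := by
    rw [hsdef, show (1:ℝ) = Real.sqrt 1 by simp]
    exact Real.sqrt_lt_sqrt (by norm_num) (by norm_num)
  have hc1' : (1 + αbar * L) * c < 1 := by simpa using hdiag 0
  have hβ1 : βbar < 1 := by simpa using hdiag 2
  -- the explicit positive vector
  set v0 : ℝ := η * αbar + αbar * L with hv0def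
  set v1 : ℝ := 1 - c + c * αbar * L * (s - 1) with hv1def
  set v2 : ℝ := η * αbar * (1 - c) + φ * αbar * L + c * φ * η * αbar
      + c * αbar ^ 2 * L * η * (φ - 1) + c * αbar ^ 2 * L ^ 2 * s * (φ - 1) with hv2def
  set d : ℝ := η * αbar - η * αbar * βbar - φ * αbar * L * βbar - c * η * αbar
      + c * η * αbar * βbar - c * η * αbar ^ 2 * L + c * η * αbar ^ 2 * L * βbar
      - c * αbar ^ 2 * L ^ 2 * s + c * αbar ^ 2 * L ^ 2 * βbar * s
      - c * φ * η * αbar * βbar - c * φ * η * αbar ^ 2 * L * βbar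
      - c * φ * αbar ^ 2 * L ^ 2 * βbar * s with hddef
  have hdeq : (1 - !![(1 + αbar * L) * c, αbar * L, βbar;
                 s * αbar * L * c, 1 - η * αbar, βbar;
                 φ * (1 + αbar * L) * c, φ * (αbar * L), βbar]).det = d := by
    rw [Matrix.det_fin_three]
    simp [Matrix.sub_apply, Matrix.one_apply, Matrix.vecHead, Matrix.vecTail, hddef]
    ring
  rw [hdeq] at hdet
  have hv0 : 0 < v0 := by
    rw [hv0def]; nlinarith [mul_pos hη hα, mul_pos hα hL]
  have hv1 : 0 < v1 := by
    rw [hv1def]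
    nlinarith [mul_pos (mul_pos hc0 (mul_pos hα hL)) (sub_pos.mpr hs1)]
  have hv2 : 0 < v2 := by
    rw [hv2def]
    have t1 : 0 < η * αbar * (1 - c) := mul_pos (mul_pos hη hα) (by linarith)
    have t2 : 0 < φ * αbar * L := mul_pos (mul_pos (by linarith) hα) hL
    have t3 : 0 < c * φ * η * αbar := by positivity
    have t4 : 0 ≤ c * αbar ^ 2 * L * η * (φ - 1) := by
      apply mul_nonneg; positivity; linarith
    have t5 : 0 ≤ c * αbar ^ 2 * L ^ 2 * s * (φ - 1) := by
      apply mul_nonneg; positivity; linarith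
    linarith
  apply stmt_12_aux _ hMnn ![v0, v1, v2] (fun i => by fin_cases i <;> simpa) d hdet
  intro i
  fin_cases i <;>
    simp [Matrix.vecHead, Matrix.vecTail, hv0def, hv1def, hv2def, hddef] <;> ring
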